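/- arXiv:1101.3920 — 4 statements merged into one kernel-verified Lean document; each statement's English description precedes it below -/
import Mathlib

section
/- Let V : ℝ^N → ℝ be twice continuously differentiable and let x : ℝ → ℝ^N be a twice continuously differentiable solution of ẍ(s) = D²V(x(s)) ∇V(x(s)) with ẋ ∈ L²(ℝ;ℝ^N) and x(t) → x^± as t → ±∞, where ∇V(x^±) = 0. Then J(x) = ∫_ℝ |∇V(x(s))|² ds. -/
open MeasureTheory Filter Topology

noncomputable section

/-- Euclidean space `ℝ^N`. -/
abbrev Euc (N : ℕ) := EuclideanSpace ℝ (Fin N)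

/-- The set of critical points of the potential `V`. -/
def critSet {N : ℕ} (V : Euc N → ℝ) : Set (Euc N) := {x | gradient V x = 0}

/-- The Hessian `D²V(x)` of `V` at `x`, as the Fréchet derivative of the gradient. -/
def hess {N : ℕ} (V : Euc N → ℝ) (x : Euc N) : Euc N →L[ℝ] Euc N := fderiv ℝ (gradient V) x

/-- The Laplacian `ΔV(x)`, i.e. the trace of the Hessian. -/
def lapl {N : ℕ} (V : Euc N → ℝ) (x : Euc N) : ℝ :=
  LinearMap.trace ℝ (Euc N) (hess V x : Euc N →ₗ[ℝ] Euc N)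

/-- The energy `J(y) = ∫_ℝ (½|ẏ|² + ½|∇V(y)|²) ds` of a path `y` with derivative `y'`. -/
def energy {N : ℕ} (V : Euc N → ℝ) (y y' : ℝ → Euc N) : ℝ :=
  ∫ s, ((1:ℝ)/2 * ‖y' s‖^2 + 1/2 * ‖gradient V (y s)‖^2)

/-- `y ∈ X(xm, xp)`: a locally absolutely continuous path of bounded variation with
derivative `y'` in `L²(ℝ)` and limits `xm`/`xp` at `∓∞`. -/
structure IsTransitionPath {N : ℕ} (V : Euc N → ℝ) (xm xp : Euc N) (y y' : ℝ → Euc N) : Prop where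
  ac : ∀ t, y t = y 0 + ∫ s in (0:ℝ)..t, y' s
  memL2 : MemLp y' 2 (volume : Measure ℝ)
  bv : BoundedVariationOn y Set.univ
  tendsto_bot : Tendsto y atBot (𝓝 xm)
  tendsto_top : Tendsto y atTop (𝓝 xp)

/-- The transition energy `Φ(xm,xp) = inf {J(y) | y ∈ X(xm,xp)}`. -/
def Phi {N : ℕ} (V : Euc N → ℝ) (xm xp : Euc N) : ℝ :=
  sInf {r | ∃ y y', IsTransitionPath V xm xp y y' ∧ r = energy V y y'}

/-- `V` is admissible: `C³`, finitely many critical points, nondegenerate Hessian at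
every critical point, and weakly coercive. -/
def Admissible {N : ℕ} (V : Euc N → ℝ) : Prop :=
  ContDiff ℝ 3 V ∧ (critSet V).Finite ∧
  (∀ x ∈ critSet V, ∀ v : Euc N, hess V x v = 0 → v = 0) ∧
  ∃ R > 0, ∃ c > 0, ∀ x : Euc N, R < ‖x‖ → c ≤ ‖gradient V x‖

open RealInnerProductSpace in
/-- Symmetry of the Hessian for a `C²` function, expressed via the inner product. -/
lemma hess_symm_aux {N : ℕ} (V : Euc N → ℝ) (hV : ContDiff ℝ 2 V) (y u v : Euc N) :
    ⟪hess V y u, v⟫ = ⟪hess V y v, u⟫ := by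
  have h1 : ContDiff ℝ 1 (fderiv ℝ V) := hV.fderiv_right (by norm_num)
  have hgrad1 : ContDiff ℝ 1 (gradient V) :=
    ((InnerProductSpace.toDual ℝ (Euc N)).symm.contDiff).comp h1
  have hgradHas : ∀ z, HasFDerivAt (gradient V) (hess V z) z := fun z =>
    ((hgrad1.differentiable one_ne_zero) z).hasFDerivAt
  have hD2 : HasFDerivAt (fderiv ℝ V) (fderiv ℝ (fderiv ℝ V) y) y :=
    (h1.differentiable one_ne_zero y).hasFDerivAt
  have key : ∀ w z : Euc N, ⟪hess V y w, z⟫ = fderiv ℝ (fderiv ℝ V) y w z := by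
    intro w z
    have hA : HasFDerivAt (fun a => fderiv ℝ V a z)
        ((ContinuousLinearMap.apply ℝ ℝ z).comp (fderiv ℝ (fderiv ℝ V) y)) y :=
      (ContinuousLinearMap.apply ℝ ℝ z).hasFDerivAt.comp y hD2
    have hB := (hgradHas y).inner ℝ (hasFDerivAt_const z y)
    have heqfun : (fun a => ⟪gradient V a, z⟫) = fun a => fderiv ℝ V a z := by
      funext a
      exact InnerProductSpace.toDual_symm_apply
    rw [heqfun] at hB
    have h2 := congrArg (fun (L : Euc N →L[ℝ] ℝ) => L w) (hB.unique hA)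
    simpa using h2
  rw [key u v, key v u]
  exact (hV.contDiffAt (x := y)).isSymmSndFDerivAt (by simp [minSmoothness_of_isRCLikeNormedField]) u v

open RealInnerProductSpace in
/-- for a heteroclinic orbit of `ẍ = D²V(x)∇V(x)` between critical points,
`J(x) = ∫_ℝ |∇V(x(s))|² ds`. -/
theorem statement4 {N : ℕ} (V : Euc N → ℝ) (hV : ContDiff ℝ 2 V)
    (x x' x'' : ℝ → Euc N)
    (hx : ∀ s, HasDerivAt x (x' s) s)
    (hx' : ∀ s, HasDerivAt x' (x'' s) s)
    (hx''cont : Continuous x'')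
    (heq : ∀ s, x'' s = hess V (x s) (gradient V (x s)))
    (hL2 : MemLp x' 2 (volume : Measure ℝ))
    (xm xp : Euc N) (hcm : gradient V xm = 0) (hcp : gradient V xp = 0)
    (hbot : Filter.Tendsto x Filter.atBot (𝓝 xm))
    (htop : Filter.Tendsto x Filter.atTop (𝓝 xp)) :
    energy V x x' = ∫ s, ‖gradient V (x s)‖^2 := by
  have h1 : ContDiff ℝ 1 (fderiv ℝ V) := hV.fderiv_right (by norm_num)
  have hgrad1 : ContDiff ℝ 1 (gradient V) :=
    ((InnerProductSpace.toDual ℝ (Euc N)).symm.contDiff).comp h1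
  have hgradHas : ∀ z, HasFDerivAt (gradient V) (hess V z) z := fun z =>
    ((hgrad1.differentiable one_ne_zero) z).hasFDerivAt
  set g : ℝ → Euc N := fun s => gradient V (x s) with hg_def
  have hg : ∀ s, HasDerivAt g (hess V (x s) (x' s)) s := fun s =>
    (hgradHas (x s)).comp_hasDerivAt s (hx s)
  -- the conserved quantity
  set E : ℝ → ℝ := fun s => ⟪x' s, x' s⟫ - ⟪g s, g s⟫ with hE_def
  have hE : ∀ s, HasDerivAt E 0 s := by
    intro s
    have hA := (hx' s).inner ℝ (hx' s)
    have hB := (hg s).inner ℝ (hg s)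
    have hkey : ⟪x' s, x'' s⟫ + ⟪x'' s, x' s⟫ -
        (⟪g s, hess V (x s) (x' s)⟫ + ⟪hess V (x s) (x' s), g s⟫) = 0 := by
      have hsym := hess_symm_aux V hV (x s) (x' s) (gradient V (x s))
      have hgs : g s = gradient V (x s) := rfl
      rw [hgs, heq s]
      linarith [hsym, real_inner_comm (x' s) (hess V (x s) (gradient V (x s))),
        real_inner_comm (gradient V (x s)) (hess V (x s) (x' s))]
    have hAB := hA.sub hB
    rw [hkey] at hAB
    exact hAB
  have hconst : ∀ s, E s = E 0 := fun s =>
    is_const_of_deriv_eq_zero (fun t => (hE t).differentiableAt)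
      (fun t => (hE t).deriv) s 0
  -- show E 0 = 0
  have hgtend : Tendsto (fun s => ‖g s‖) atTop (𝓝 0) := by
    have hc : Continuous (gradient V) := hgrad1.continuous
    have : Tendsto g atTop (𝓝 (gradient V xp)) := (hc.tendsto xp).comp htop
    rw [hcp] at this
    simpa using this.norm
  have hfreq : ∀ ε : ℝ, 0 < ε → ∃ᶠ s in atTop, ‖x' s‖ < ε := by
    intro ε hε
    by_contra hcon
    rw [not_frequently] at hcon
    simp only [not_lt] at hcon
    obtain ⟨T, hT⟩ := eventually_atTop.1 hcon
    have hsub : Set.Ici T ⊆ {s : ℝ | ε.toNNReal ≤ ‖x' s‖₊} := by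
      intro s hs
      simp only [Set.mem_setOf_eq, ← NNReal.coe_le_coe]
      simpa [Real.coe_toNNReal _ hε.le] using hT s hs
    have hfin := hL2.meas_ge_lt_top (by norm_num) (by norm_num)
      (ε := ε.toNNReal) (by simp [hε])
    have hinf : (volume : Measure ℝ) (Set.Ici T) = ⊤ := Real.volume_Ici
    exact absurd ((measure_mono hsub).trans_lt hfin) (by simp [hinf])
  have hc0 : E 0 = 0 := by
    by_contra hc
    have habs : 0 < |E 0| := abs_pos.mpr hc
    set ε := Real.sqrt |E 0| with hε_def
    have hεpos : 0 < ε := Real.sqrt_pos.mpr habs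
    have hεsq : ε ^ 2 = |E 0| := Real.sq_sqrt habs.le
    have hev : ∀ᶠ s in atTop, ‖g s‖ < ε :=
      (hgtend.eventually (gt_mem_nhds hεpos))
    obtain ⟨s, hs1, hs2⟩ := ((hfreq ε hεpos).and_eventually hev).exists
    have hEs : E s = E 0 := hconst s
    have h1' : ‖x' s‖ ^ 2 < ε ^ 2 := by
      nlinarith [norm_nonneg (x' s)]
    have h2' : ‖g s‖ ^ 2 < ε ^ 2 := by
      nlinarith [norm_nonneg (g s)]
    have hEs2 : E s = ‖x' s‖ ^ 2 - ‖g s‖ ^ 2 := by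
      simp only [hE_def, real_inner_self_eq_norm_sq]
    have : |E 0| < ε ^ 2 := by
      rw [← hEs, hEs2, abs_sub_lt_iff]
      constructor
      · have : (0:ℝ) ≤ ‖g s‖ ^ 2 := sq_nonneg _
        linarith
      · have : (0:ℝ) ≤ ‖x' s‖ ^ 2 := sq_nonneg _
        linarith
    rw [hεsq] at this
    exact lt_irrefl _ this
  -- pointwise equality of integrands
  have hpt : ∀ s, ‖x' s‖ ^ 2 = ‖g s‖ ^ 2 := by
    intro s
    have := hconst s
    rw [hc0] at this
    have hEs2 : E s = ‖x' s‖ ^ 2 - ‖g s‖ ^ 2 := by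
      simp only [hE_def, real_inner_self_eq_norm_sq]
    rw [hEs2] at this
    linarith
  rw [energy]
  congr 1
  funext s
  have := hpt s
  simp only [hg_def] at this
  rw [this]
  ring
end
end

section
/- Let V : ℝ^N → ℝ be three times continuously differentiable and let y : [0,T) → ℝ^N be a twice continuously differentiable solution of ÿ(s) = D²V(y(s)) ∇V(y(s)) whose initial velocity satisfies ẏ(0) = −∇V(y(0)). Then ẏ(s) = −∇V(y(s)) for all s ∈ [0,T); that is, the manifold M = {(x, −∇V(x)) : x ∈ ℝ^N} ⊂ ℝ^{2N} is invariant under the flow of the second-order equation. -/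
open MeasureTheory Filter Topology

noncomputable section

/-- the manifold `M = {(x, −∇V(x))}` is invariant: a `C²` solution of
`ÿ = D²V(y)∇V(y)` on `[0,T)` with `ẏ(0) = −∇V(y(0))` satisfies `ẏ(s) = −∇V(y(s))`
on all of `[0,T)`. -/
theorem statement6 {N : ℕ} (V : Euc N → ℝ) (hV : ContDiff ℝ 3 V)
    (T : ℝ) (hT : 0 < T)
    (y y' y'' : ℝ → Euc N)
    (hy : ∀ s ∈ Set.Ico (0:ℝ) T, HasDerivWithinAt y (y' s) (Set.Ico (0:ℝ) T) s)
    (hy' : ∀ s ∈ Set.Ico (0:ℝ) T, HasDerivWithinAt y' (y'' s) (Set.Ico (0:ℝ) T) s)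
    (hy''cont : ContinuousOn y'' (Set.Ico (0:ℝ) T))
    (heq : ∀ s ∈ Set.Ico (0:ℝ) T, y'' s = hess V (y s) (gradient V (y s)))
    (hinit : y' 0 = -(gradient V (y 0))) :
    ∀ s ∈ Set.Ico (0:ℝ) T, y' s = -(gradient V (y s)) := by
    -- gradient V is C²
  have hgradC : ContDiff ℝ 2 (gradient V) := by
    have h1 : ContDiff ℝ 2 (fderiv ℝ V) := hV.fderiv_right (by norm_num)
    have h2 : gradient V = fun x => (InnerProductSpace.toDual ℝ (Euc N)).symm (fderiv ℝ V x) := rfl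
    rw [h2]
    exact (InnerProductSpace.toDual ℝ (Euc N)).symm.contDiff.comp h1
  have hgradDiff : Differentiable ℝ (gradient V) := hgradC.differentiable (by norm_num)
  have hhessCont : Continuous (fun x => hess V x) :=
    hgradC.continuous_fderiv (by norm_num)
  -- the function w = y' + ∇V ∘ y
  set w : ℝ → Euc N := fun s => y' s + gradient V (y s) with hw
  have hwderiv : ∀ s ∈ Set.Ico (0:ℝ) T,
      HasDerivWithinAt w (hess V (y s) (w s)) (Set.Ico (0:ℝ) T) s := by
    intro s hs
    have h1 : HasDerivWithinAt (fun t => gradient V (y t)) (hess V (y s) (y' s))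
        (Set.Ico (0:ℝ) T) s :=
      (hgradDiff (y s)).hasFDerivAt.comp_hasDerivWithinAt s (hy s hs)
    have := (hy' s hs).add h1
    rw [heq s hs] at this
    refine this.congr_deriv ?_
    rw [hw]
    simp [map_add]
    abel
  -- continuity of y and w on Ico 0 T
  have hycont : ContinuousOn y (Set.Ico (0:ℝ) T) := fun s hs => (hy s hs).continuousWithinAt
  have hwcont : ContinuousOn w (Set.Ico (0:ℝ) T) := fun s hs =>
    ((hy' s hs).continuousWithinAt.add
      (hgradC.continuous.continuousAt.comp_continuousWithinAt
        (hycont s hs)))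
  intro s0 hs0
  obtain ⟨hs00, hs0T⟩ := hs0
  have hsub : Set.Icc (0:ℝ) s0 ⊆ Set.Ico 0 T := fun t ht => ⟨ht.1, lt_of_le_of_lt ht.2 hs0T⟩
  -- bound on the Hessian along y on [0, s0]
  have hcont : ContinuousOn (fun t => ‖hess V (y t)‖) (Set.Icc (0:ℝ) s0) :=
    (hhessCont.comp_continuousOn (hycont.mono hsub)).norm
  obtain ⟨K, hK⟩ : ∃ K, ∀ t ∈ Set.Icc (0:ℝ) s0, ‖hess V (y t)‖ ≤ K := by
    rcases (isCompact_Icc.bddAbove_image hcont) with ⟨K, hK⟩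
    exact ⟨K, fun t ht => hK ⟨t, ht, rfl⟩⟩
  have key : ∀ t ∈ Set.Icc (0:ℝ) s0, ‖w t‖ ≤ gronwallBound 0 K 0 (t - 0) := by
    apply norm_le_gronwallBound_of_norm_deriv_right_le (hwcont.mono hsub)
    · intro t ht
      have htT : t ∈ Set.Ico (0:ℝ) T := ⟨ht.1, lt_of_lt_of_le ht.2 (le_of_lt hs0T)⟩
      refine (hwderiv t htT).mono_of_mem_nhdsWithin ?_
      have h1 : Set.Ico t T ∈ 𝓝[Set.Ici t] t :=
        inter_mem self_mem_nhdsWithin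
          (mem_nhdsWithin_of_mem_nhds (Iio_mem_nhds htT.2))
      exact Filter.mem_of_superset h1 (fun u hu => ⟨le_trans ht.1 hu.1, hu.2⟩)
    · simp [hw, hinit]
    · intro t ht
      have htT : t ∈ Set.Ico (0:ℝ) T := ⟨ht.1, lt_of_lt_of_le ht.2 (le_of_lt hs0T)⟩
      calc ‖hess V (y t) (w t)‖ ≤ ‖hess V (y t)‖ * ‖w t‖ :=
            (hess V (y t)).le_opNorm _
        _ ≤ K * ‖w t‖ + 0 := by
            rw [add_zero]
            exact mul_le_mul_of_nonneg_right (hK t ⟨ht.1, le_of_lt ht.2⟩) (norm_nonneg _)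
  have := key s0 ⟨hs00, le_refl _⟩
  rw [gronwallBound_ε0_δ0] at this
  have hw0 : w s0 = 0 := norm_le_zero_iff.mp this
  have : y' s0 + gradient V (y s0) = 0 := hw0
  exact eq_neg_of_add_eq_zero_left this
end
end

section
/- Let V : ℝ^N → ℝ be an admissible potential with critical set E. Let x : [0,1] → ℝ^N be measurable with meas({t ∈ [0,1] : x(t) ∉ E}) > 0, and let (x_ε)_{ε>0} be a family in H¹((0,1);ℝ^N) such that x_ε(t) → x(t) for almost every t ∈ [0,1] as ε → 0. Then liminf_{ε→0} J_ε(x_ε) = +∞. -/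
open MeasureTheory Filter Topology

noncomputable section

open scoped ENNReal in
private lemma key14 {N : ℕ} (V : Euc N → ℝ) (hadm : Admissible V)
    (x : ℝ → Euc N) (hmeas : Measurable x)
    (hpos : 0 < volume {t | t ∈ Set.Icc (0:ℝ) 1 ∧ x t ∉ critSet V})
    (xe xe' : ℝ → ℝ → Euc N)
    (hH1 : ∀ ε > 0, (∀ t ∈ Set.Icc (0:ℝ) 1, xe ε t = xe ε 0 + ∫ s in (0:ℝ)..t, xe' ε s) ∧
      MemLp (xe' ε) 2 (volume.restrict (Set.Ioo (0:ℝ) 1)))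
    (hconv : ∀ᵐ t ∂(volume.restrict (Set.Icc (0:ℝ) 1)),
      Filter.Tendsto (fun ε => xe ε t) (𝓝[>] (0:ℝ)) (𝓝 (x t)))
    (u : ℕ → ℝ) (hu0 : ∀ n, 0 < u n) (hu : Tendsto u atTop (𝓝[>] (0:ℝ))) :
    Tendsto (fun n => ∫ s in (0:ℝ)..1,
        (u n/2 * ‖xe' (u n) s‖^2 + 1/(2*(u n)) * ‖gradient V (xe (u n) s)‖^2))
      atTop atTop := by
  haveI : IsFiniteMeasure (volume.restrict (Set.Ioo (0:ℝ) 1)) :=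
    ⟨by rw [Measure.restrict_apply_univ]; exact measure_Ioo_lt_top⟩
  have hgrad : Continuous (gradient V) := by
    have h1 : Continuous (fderiv ℝ V) := hadm.1.continuous_fderiv (by norm_num)
    exact (InnerProductSpace.toDual ℝ (Euc N)).symm.continuous.comp h1
  set F : Euc N → ℝ := fun p => ‖gradient V p‖^2 with hFdef
  have hF : Continuous F := hgrad.norm.pow 2
  -- basic facts for each ε > 0
  have hIntOn : ∀ ε > 0, IntegrableOn (fun s => ‖xe' ε s‖^2) (Set.Ioc (0:ℝ) 1) volume := by
    intro ε hε
    have h2 : Integrable (fun s => ‖xe' ε s‖^2) (volume.restrict (Set.Ioo (0:ℝ) 1)) :=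
      (hH1 ε hε).2.norm.integrable_sq
    rwa [IntegrableOn, ← Measure.restrict_congr_set Ioo_ae_eq_Ioc]
  have hcontG : ∀ ε > 0, ContinuousOn (fun t => xe ε 0 + ∫ s in (0:ℝ)..t, xe' ε s)
      (Set.Icc (0:ℝ) 1) := by
    intro ε hε
    have hint : IntegrableOn (xe' ε) (Set.Icc (0:ℝ) 1) volume := by
      have := (hH1 ε hε).2.integrable (by norm_num : (1:ℝ≥0∞) ≤ 2)
      rwa [IntegrableOn, ← Measure.restrict_congr_set Ioo_ae_eq_Icc]
    have := intervalIntegral.continuousOn_primitive_interval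
      (a := (0:ℝ)) (b := (1:ℝ)) (μ := volume) (f := xe' ε)
      (by rwa [Set.uIcc_of_le (by norm_num : (0:ℝ) ≤ 1)])
    rw [Set.uIcc_of_le (by norm_num : (0:ℝ) ≤ 1)] at this
    exact continuousOn_const.add this
  have hxe_cont : ∀ ε > 0, ContinuousOn (fun t => F (xe ε t)) (Set.Icc (0:ℝ) 1) := by
    intro ε hε
    have : ContinuousOn (fun t => F (xe ε 0 + ∫ s in (0:ℝ)..t, xe' ε s)) (Set.Icc (0:ℝ) 1) :=
      hF.comp_continuousOn (hcontG ε hε)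
    exact this.congr fun t ht => by rw [(hH1 ε hε).1 t ht]
  have hxe_asm : ∀ ε > 0, AEStronglyMeasurable (fun t => F (xe ε t))
      (volume.restrict (Set.Ioc (0:ℝ) 1)) := fun ε hε =>
    ((hxe_cont ε hε).mono Set.Ioc_subset_Icc_self).aestronglyMeasurable measurableSet_Ioc
  have hxe_int : ∀ ε > 0, IntegrableOn (fun t => F (xe ε t)) (Set.Ioc (0:ℝ) 1) volume := by
    intro ε hε
    obtain ⟨C, hC⟩ := isCompact_Icc.exists_bound_of_continuousOn (hxe_cont ε hε)
    refine Integrable.mono' (integrable_const C) (hxe_asm ε hε) ?_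
    filter_upwards [ae_restrict_mem measurableSet_Ioc] with t ht
    exact hC t (Set.Ioc_subset_Icc_self ht)
  -- the ENNReal-valued integrands
  set f : ℝ → ℝ → ℝ≥0∞ := fun ε t => ENNReal.ofReal (F (xe ε t)) with hfdef
  set g : ℝ → ℝ≥0∞ := fun t => ENNReal.ofReal (F (x t)) with hgdef
  have hgmeas : Measurable g :=
    (ENNReal.continuous_ofReal.comp hF).measurable.comp hmeas
  -- positivity of the limit integral
  have hL : 0 < ∫⁻ t in Set.Ioc (0:ℝ) 1, g t := by
    rw [lintegral_pos_iff_support hgmeas, Measure.restrict_apply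
      (measurableSet_support hgmeas)]
    have hsub : {t | t ∈ Set.Icc (0:ℝ) 1 ∧ x t ∉ critSet V}
        ⊆ (Function.support g ∩ Set.Ioc 0 1) ∪ {0} := by
      intro t ⟨ht1, ht2⟩
      rcases eq_or_ne t 0 with rfl | h0
      · exact Or.inr rfl
      · refine Or.inl ⟨?_, lt_of_le_of_ne ht1.1 (Ne.symm h0), ht1.2⟩
        have : gradient V (x t) ≠ 0 := ht2
        simp only [hgdef, Function.mem_support, ne_eq, ENNReal.ofReal_eq_zero, not_le, hFdef]
        exact pow_pos (norm_pos_iff.mpr this) 2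
    calc (0:ℝ≥0∞) < volume {t | t ∈ Set.Icc (0:ℝ) 1 ∧ x t ∉ critSet V} := hpos
      _ ≤ volume ((Function.support g ∩ Set.Ioc 0 1) ∪ {0}) := measure_mono hsub
      _ ≤ volume (Function.support g ∩ Set.Ioc 0 1) + volume {0} := measure_union_le _ _
      _ = volume (Function.support g ∩ Set.Ioc 0 1) := by simp
  -- a.e. convergence along the sequence
  have hae : ∀ᵐ t ∂(volume.restrict (Set.Ioc (0:ℝ) 1)),
      Tendsto (fun n => xe (u n) t) atTop (𝓝 (x t)) :=
    (ae_restrict_of_ae_restrict_of_subset Set.Ioc_subset_Icc_self hconv).mono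
      fun t ht => ht.comp hu
  have hliminf_ae : ∀ᵐ t ∂(volume.restrict (Set.Ioc (0:ℝ) 1)),
      Filter.liminf (fun n => f (u n) t) atTop = g t := by
    filter_upwards [hae] with t ht
    exact (((ENNReal.continuous_ofReal.comp hF).tendsto (x t)).comp ht).liminf_eq
  have hfmeas : ∀ n, AEMeasurable (fun t => f (u n) t) (volume.restrict (Set.Ioc (0:ℝ) 1)) :=
    fun n => ENNReal.measurable_ofReal.comp_aemeasurable
      ((hxe_asm (u n) (hu0 n)).aemeasurable)
  have hfatou : (∫⁻ t in Set.Ioc (0:ℝ) 1, g t)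
      ≤ liminf (fun n => ∫⁻ t in Set.Ioc (0:ℝ) 1, f (u n) t) atTop := by
    calc (∫⁻ t in Set.Ioc (0:ℝ) 1, g t)
        = ∫⁻ t in Set.Ioc (0:ℝ) 1, Filter.liminf (fun n => f (u n) t) atTop :=
          (lintegral_congr_ae hliminf_ae).symm
      _ ≤ liminf (fun n => ∫⁻ t in Set.Ioc (0:ℝ) 1, f (u n) t) atTop :=
          lintegral_liminf_le' hfmeas
  -- choose a positive lower bound
  set L := ∫⁻ t in Set.Ioc (0:ℝ) 1, g t with hLdef
  set r : ℝ≥0∞ := min L 1 / 2 with hrdef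
  have hmin0 : min L 1 ≠ 0 := (lt_min hL zero_lt_one).ne'
  have hmintop : min L 1 ≠ ⊤ := ((min_le_right _ _).trans_lt ENNReal.one_lt_top).ne
  have hrlt : r < L := lt_of_lt_of_le (ENNReal.half_lt_self hmin0 hmintop) (min_le_left _ _)
  have hr0 : r ≠ 0 := by
    simp only [hrdef, ne_eq, ENNReal.div_eq_zero_iff]
    push_neg
    exact ⟨hmin0, by norm_num⟩
  have hrtop : r ≠ ⊤ := ((ENNReal.half_le_self).trans_lt
    (lt_of_le_of_lt (min_le_right _ _) ENNReal.one_lt_top)).ne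
  set c : ℝ := r.toReal with hcdef
  have hc : 0 < c := ENNReal.toReal_pos hr0 hrtop
  have hevent : ∀ᶠ n in atTop, r < ∫⁻ t in Set.Ioc (0:ℝ) 1, f (u n) t :=
    eventually_lt_of_lt_liminf (lt_of_lt_of_le hrlt hfatou)
  -- lower bound on the real integrals
  have hbound : ∀ᶠ n in atTop, c / 2 * (u n)⁻¹ ≤ ∫ s in (0:ℝ)..1,
      (u n/2 * ‖xe' (u n) s‖^2 + 1/(2*(u n)) * ‖gradient V (xe (u n) s)‖^2) := by
    filter_upwards [hevent] with n hn
    have hε := hu0 n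
    have hint1 : IntegrableOn (fun s => u n/2 * ‖xe' (u n) s‖^2) (Set.Ioc (0:ℝ) 1) volume :=
      (hIntOn (u n) hε).const_mul _
    have hint2 : IntegrableOn (fun s => 1/(2*(u n)) * F (xe (u n) s)) (Set.Ioc (0:ℝ) 1) volume :=
      (hxe_int (u n) hε).const_mul _
    have heqT : ∫ t in Set.Ioc (0:ℝ) 1, F (xe (u n) t)
        = (∫⁻ t in Set.Ioc (0:ℝ) 1, f (u n) t).toReal := by
      rw [integral_eq_lintegral_of_nonneg_ae ?_ (hxe_asm (u n) hε)]
      filter_upwards with t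
      positivity
    have hlttop : (∫⁻ t in Set.Ioc (0:ℝ) 1, f (u n) t) < ⊤ :=
      (hxe_int (u n) hε).lintegral_lt_top
    have hcle : c ≤ ∫ t in Set.Ioc (0:ℝ) 1, F (xe (u n) t) := by
      rw [heqT, hcdef]
      exact ENNReal.toReal_le_toReal hrtop hlttop.ne |>.mpr hn.le
    rw [intervalIntegral.integral_of_le (by norm_num : (0:ℝ) ≤ 1),
      integral_add hint1 hint2]
    simp only [integral_const_mul]
    have h1 : 0 ≤ u n / 2 * ∫ s in Set.Ioc (0:ℝ) 1, ‖xe' (u n) s‖^2 :=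
      mul_nonneg (by positivity) (integral_nonneg fun s => by positivity)
    have h2 : c / 2 * (u n)⁻¹ ≤ 1/(2*(u n)) * ∫ t in Set.Ioc (0:ℝ) 1, F (xe (u n) t) := by
      have : c / 2 * (u n)⁻¹ = 1/(2*(u n)) * c := by rw [one_div, mul_inv]; ring
      rw [this]
      exact mul_le_mul_of_nonneg_left hcle (by positivity)
    linarith
  refine tendsto_atTop_mono' atTop hbound ?_
  exact (tendsto_inv_nhdsGT_zero.comp hu).const_mul_atTop (by positivity : (0:ℝ) < c / 2)


/-- if the a.e. limit `x` of a family `x_ε ∈ H¹((0,1))` is not supported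
on the critical set on a set of positive measure, then `J_ε(x_ε) → +∞`
(i.e. `liminf_{ε→0} J_ε(x_ε) = +∞`). -/
theorem statement14 {N : ℕ} (V : Euc N → ℝ) (hadm : Admissible V)
    (x : ℝ → Euc N) (hmeas : Measurable x)
    (hpos : 0 < volume {t | t ∈ Set.Icc (0:ℝ) 1 ∧ x t ∉ critSet V})
    (xe xe' : ℝ → ℝ → Euc N)
    (hH1 : ∀ ε > 0, (∀ t ∈ Set.Icc (0:ℝ) 1, xe ε t = xe ε 0 + ∫ s in (0:ℝ)..t, xe' ε s) ∧
      MemLp (xe' ε) 2 (volume.restrict (Set.Ioo (0:ℝ) 1)))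
    (hconv : ∀ᵐ t ∂(volume.restrict (Set.Icc (0:ℝ) 1)),
      Filter.Tendsto (fun ε => xe ε t) (𝓝[>] (0:ℝ)) (𝓝 (x t))) :
    Filter.Tendsto
      (fun ε => ∫ s in (0:ℝ)..1, (ε/2 * ‖xe' ε s‖^2 + 1/(2*ε) * ‖gradient V (xe ε s)‖^2))
      (𝓝[>] (0:ℝ)) Filter.atTop := by
  rw [tendsto_iff_seq_tendsto]
  intro u hu
  have hev : ∀ᶠ n in atTop, u n ∈ Set.Ioi (0:ℝ) := hu self_mem_nhdsWithin
  obtain ⟨N₀, hN₀⟩ := eventually_atTop.1 hev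
  rw [← tendsto_add_atTop_iff_nat N₀]
  exact key14 V hadm x hmeas hpos xe xe' hH1 hconv (fun n => u (n + N₀))
    (fun n => hN₀ _ (Nat.le_add_left _ _)) (hu.comp (tendsto_add_atTop_nat N₀))
end
end

section
/- Let V : ℝ^N → ℝ be continuously differentiable, let x⁺, y₀ ∈ ℝ^N, and suppose C > 0 is such that |∇V(z)|² ≤ C|z − x⁺|² for every z on the line segment from y₀ to x⁺. Then there exists a locally absolutely continuous path y : [0,∞) → ℝ^N with y(0) = y₀, y(s) = x⁺ for all s ≥ 1, and ½ ∫₀^∞ (|ẏ(s)|² + |∇V(y(s))|²) ds ≤ ½ (1 + C/3) |y₀ − x⁺|². -/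
open MeasureTheory Filter Topology

noncomputable section

/-- the comparison path: if `|∇V|² ≤ C|·−x⁺|²` on the segment from `y₀`
to `x⁺`, there is an absolutely continuous path from `y₀` reaching `x⁺` at time 1 with
energy at most `½(1 + C/3)|y₀ − x⁺|²`. -/
theorem statement17 {N : ℕ} (V : Euc N → ℝ) (hV : ContDiff ℝ 1 V)
    (xp y₀ : Euc N) (C : ℝ) (hC : 0 < C)
    (hseg : ∀ z ∈ segment ℝ y₀ xp, ‖gradient V z‖^2 ≤ C * ‖z - xp‖^2) :
    ∃ y y' : ℝ → Euc N,
      y 0 = y₀ ∧ (∀ s ≥ (1:ℝ), y s = xp) ∧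
      (∀ t ∈ Set.Ici (0:ℝ), y t = y 0 + ∫ s in (0:ℝ)..t, y' s) ∧
      IntegrableOn (fun s => ‖y' s‖^2 + ‖gradient V (y s)‖^2) (Set.Ioi (0:ℝ)) ∧
      (1:ℝ)/2 * (∫ s in Set.Ioi (0:ℝ), (‖y' s‖^2 + ‖gradient V (y s)‖^2))
        ≤ 1/2 * (1 + C/3) * ‖y₀ - xp‖^2 := by
  classical
  set v : Euc N := xp - y₀ with hv
  set y : ℝ → Euc N := fun t => y₀ + (min t 1) • v with hy
  set y' : ℝ → Euc N := (Set.Ioc (0:ℝ) 1).indicator (fun _ => v) with hy'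
  have hgrad_cont : Continuous (fun x => gradient V x) := by
    have h1 : Continuous (fderiv ℝ V) := hV.continuous_fderiv one_ne_zero
    have : (fun x => gradient V x)
        = fun x => (InnerProductSpace.toDual ℝ (Euc N)).symm (fderiv ℝ V x) := by
      funext x; rfl
    rw [this]
    exact (InnerProductSpace.toDual ℝ (Euc N)).symm.continuous.comp h1
  have hxp0 : gradient V xp = 0 := by
    have h := hseg xp (right_mem_segment ℝ y₀ xp)
    simp only [sub_self, norm_zero] at h
    have : ‖gradient V xp‖^2 ≤ 0 := by nlinarith
    have : ‖gradient V xp‖ = 0 := by nlinarith [sq_nonneg ‖gradient V xp‖, norm_nonneg (gradient V xp)]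
    exact norm_eq_zero.mp this
  have hy0 : y 0 = y₀ := by simp [hy]
  have hy1 : ∀ s ≥ (1:ℝ), y s = xp := by
    intro s hs
    simp only [hy, min_eq_right hs, one_smul, hv]
    abel
  have hycont : Continuous y := by
    apply continuous_const.add
    exact ((continuous_id.min continuous_const).smul continuous_const)
  -- membership in segment
  have hmem : ∀ s ∈ Set.Icc (0:ℝ) 1, y s ∈ segment ℝ y₀ xp := by
    intro s hs
    rw [segment_eq_image]
    refine ⟨s, hs, ?_⟩
    simp only [hy, min_eq_left hs.2, hv]
    module
  have hysub : ∀ s ∈ Set.Icc (0:ℝ) 1, y s - xp = (1 - s) • (y₀ - xp) := by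
    intro s hs
    simp only [hy, min_eq_left hs.2, hv]
    module
  -- pointwise values of y'
  have hy'on : ∀ s ∈ Set.Ioc (0:ℝ) 1, y' s = v := by
    intro s hs; simp [hy', Set.indicator_of_mem hs]
  have hy'off : ∀ s : ℝ, s ∉ Set.Ioc (0:ℝ) 1 → y' s = 0 := by
    intro s hs; simp [hy', Set.indicator_of_notMem hs]
  refine ⟨y, y', hy0, hy1, ?_, ?_, ?_⟩
  · -- ac
    intro t ht
    rw [hy0]
    rw [intervalIntegral.integral_of_le ht]
    rw [MeasureTheory.setIntegral_indicator measurableSet_Ioc]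
    rw [Set.Ioc_inter_Ioc, MeasureTheory.setIntegral_const]
    have hmin : (0:ℝ) ≤ min t 1 := le_min ht zero_le_one
    simp only [max_self, Measure.real, Real.volume_Ioc, sub_zero, ENNReal.toReal_ofReal hmin]
    rfl
  · -- integrability
    have hsplit : Set.Ioi (0:ℝ) = Set.Ioc 0 1 ∪ Set.Ioi 1 :=
      (Set.Ioc_union_Ioi_eq_Ioi zero_le_one).symm
    rw [hsplit]
    apply MeasureTheory.IntegrableOn.union
    · -- on Ioc 0 1
      have hcg : Continuous (fun s : ℝ => ‖v‖^2 + ‖gradient V (y s)‖^2) := by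
        apply continuous_const.add
        exact ((hgrad_cont.comp hycont).norm.pow 2)
      have : MeasureTheory.IntegrableOn (fun s : ℝ => ‖v‖^2 + ‖gradient V (y s)‖^2)
          (Set.Ioc (0:ℝ) 1) := hcg.integrableOn_Ioc
      apply this.congr_fun _ measurableSet_Ioc
      intro s hs
      simp [hy'on s hs]
    · -- on Ioi 1 : the function is 0
      have : MeasureTheory.IntegrableOn (fun _ : ℝ => (0:ℝ)) (Set.Ioi (1:ℝ)) :=
        integrableOn_zero
      apply this.congr_fun _ measurableSet_Ioi
      intro s hs
      simp [hy'off s (by simp only [Set.mem_Ioc, not_and, not_le]; intro _; exact Set.mem_Ioi.mp hs),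
        hy1 s (le_of_lt (Set.mem_Ioi.mp hs)), hxp0]
  · -- the energy bound
    have hsplit : Set.Ioi (0:ℝ) = Set.Ioc 0 1 ∪ Set.Ioi 1 :=
      (Set.Ioc_union_Ioi_eq_Ioi zero_le_one).symm
    set f : ℝ → ℝ := fun s => ‖y' s‖^2 + ‖gradient V (y s)‖^2 with hf
    have hcg : Continuous (fun s : ℝ => ‖v‖^2 + ‖gradient V (y s)‖^2) := by
      apply continuous_const.add
      exact ((hgrad_cont.comp hycont).norm.pow 2)
    have hfint : MeasureTheory.IntegrableOn f (Set.Ioc (0:ℝ) 1) := by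
      apply hcg.integrableOn_Ioc.congr_fun _ measurableSet_Ioc
      intro s hs; simp only [hf]; rw [hy'on s hs]
    have hfzero : ∀ s ∈ Set.Ioi (1:ℝ), f s = 0 := by
      intro s hs
      simp only [hf]
      rw [hy'off s (by simp only [Set.mem_Ioc, not_and, not_le]; intro _; exact Set.mem_Ioi.mp hs),
        hy1 s (le_of_lt (Set.mem_Ioi.mp hs)), hxp0]
      simp
    have hfint2 : MeasureTheory.IntegrableOn f (Set.Ioi (1:ℝ)) := by
      refine (integrableOn_zero (ε' := ℝ)).congr_fun ?_ measurableSet_Ioi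
      intro s hs; exact (hfzero s hs).symm
    have hintzero : ∫ s in Set.Ioi (1:ℝ), f s = 0 := by
      rw [MeasureTheory.setIntegral_congr_fun measurableSet_Ioi hfzero]
      simp
    have hsum : ∫ s in Set.Ioi (0:ℝ), f s
        = (∫ s in Set.Ioc (0:ℝ) 1, f s) + ∫ s in Set.Ioi (1:ℝ), f s := by
      rw [hsplit]
      have hdisj : Disjoint (Set.Ioc (0:ℝ) 1) (Set.Ioi 1) := by
        rw [Set.disjoint_left]
        intro a ha ha'
        exact absurd ha.2 (not_le.mpr (Set.mem_Ioi.mp ha'))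
      exact MeasureTheory.setIntegral_union hdisj measurableSet_Ioi hfint hfint2
    -- bound on Ioc 0 1
    set g : ℝ → ℝ := fun s => ‖v‖^2 + C * ((1-s)^2 * ‖y₀ - xp‖^2) with hg
    have hgcont : Continuous g := by
      apply continuous_const.add
      exact continuous_const.mul ((((continuous_const.sub continuous_id).pow 2)).mul continuous_const)
    have hle : ∀ s ∈ Set.Ioc (0:ℝ) 1, f s ≤ g s := by
      intro s hs
      have hs' : s ∈ Set.Icc (0:ℝ) 1 := ⟨hs.1.le, hs.2⟩
      have h1 := hseg (y s) (hmem s hs')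
      rw [hysub s hs'] at h1
      have h2 : ‖(1 - s) • (y₀ - xp)‖^2 = (1-s)^2 * ‖y₀ - xp‖^2 := by
        rw [norm_smul]
        simp [mul_pow, sq_abs]
      rw [h2] at h1
      simp only [hf, hg]
      rw [hy'on s hs]
      linarith
    have hmono : ∫ s in Set.Ioc (0:ℝ) 1, f s ≤ ∫ s in Set.Ioc (0:ℝ) 1, g s :=
      MeasureTheory.setIntegral_mono_on hfint hgcont.integrableOn_Ioc measurableSet_Ioc hle
    have hgval : ∫ s in Set.Ioc (0:ℝ) 1, g s = (1 + C/3) * ‖y₀ - xp‖^2 := by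
      rw [← intervalIntegral.integral_of_le zero_le_one]
      have hpoly : ∫ s in (0:ℝ)..1, (1-s)^2 = 1/3 := by
        rw [intervalIntegral.integral_comp_sub_left (fun x => x^2) 1]
        simp [integral_pow]
        norm_num
      have h1 : IntervalIntegrable (fun _ : ℝ => ‖v‖^2) volume 0 1 :=
        intervalIntegrable_const
      have h2 : IntervalIntegrable (fun s : ℝ => C * ((1-s)^2 * ‖y₀ - xp‖^2)) volume 0 1 := by
        apply Continuous.intervalIntegrable
        exact continuous_const.mul ((((continuous_const.sub continuous_id).pow 2)).mul continuous_const)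
      simp only [hg]
      rw [intervalIntegral.integral_add h1 h2]
      have h3 : ∫ s in (0:ℝ)..1, C * ((1-s)^2 * ‖y₀ - xp‖^2)
          = C * ((∫ s in (0:ℝ)..1, (1-s)^2) * ‖y₀ - xp‖^2) := by
        rw [← intervalIntegral.integral_mul_const, ← intervalIntegral.integral_const_mul]
      rw [h3, hpoly]
      have hvnorm : ‖v‖ = ‖y₀ - xp‖ := by rw [hv, norm_sub_rev]
      rw [intervalIntegral.integral_const, hvnorm]
      simp only [smul_eq_mul]
      ring
    have hfinal : ∫ s in Set.Ioi (0:ℝ), f s ≤ (1 + C/3) * ‖y₀ - xp‖^2 := by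
      rw [hsum, hintzero, add_zero, ← hgval]
      exact hmono
    linarith
end
end
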